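/- arXiv:2510.14153 — 3 statements merged into one kernel-verified Lean document; each statement's English description precedes it below -/
import Mathlib

section
/- For any even integer m ≥ 2, any s > 0, and any real y, the inverse Fourier-type integral ∫_{ℝ} cos(λy) · exp(-sλ^m) dλ equals (2√π / (m · s^{1/m})) · Σ_{k=0}^∞ [Γ(1/m + 2k/m) / (k! · Γ(1/2 + k))] · (-y²/(4 s^{2/m}))^k, and this series converges absolutely. -/
open MeasureTheory Real

lemma aux_gamma_half (k : ℕ) : Real.sqrt π * k.factorial ≤ 2 ^ k * Real.Gamma (1/2 + k) := by
  induction k with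
  | zero =>
    rw [show ((0:ℕ):ℝ) = 0 by norm_num]
    rw [show (1/2 + (0:ℝ)) = 1/2 by ring, Real.Gamma_one_half_eq]
    simp
  | succ k ih =>
    have hpos : (0:ℝ) < 1/2 + k := by positivity
    have h1 : Real.Gamma (1/2 + (k+1:ℕ)) = (1/2 + k) * Real.Gamma (1/2 + k) := by
      push_cast
      rw [show (1/2 + ((k:ℝ)+1)) = (1/2 + k) + 1 by ring, Real.Gamma_add_one hpos.ne']
    rw [h1, pow_succ]
    have hG : 0 < Real.Gamma (1/2 + (k:ℝ)) := Real.Gamma_pos_of_pos hpos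
    have hf : (1:ℝ) ≤ k.factorial := by exact_mod_cast k.factorial_pos
    have hs : (0:ℝ) < Real.sqrt π := Real.sqrt_pos.mpr Real.pi_pos
    push_cast [Nat.factorial_succ]
    nlinarith [mul_le_mul_of_nonneg_left ih (by positivity : (0:ℝ) ≤ 2*k+1),
      mul_nonneg (mul_nonneg hs.le (Nat.cast_nonneg (α := ℝ) k))
        (by positivity : (0:ℝ) ≤ k.factorial)]

lemma aux_gamma_upper (m k : ℕ) (hm2 : 2 ≤ m) :
    Real.Gamma (1/m + 2*k/m) ≤ Real.Gamma (1/m) + (k+1).factorial := by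
  have h2m : (2:ℝ) ≤ m := by exact_mod_cast hm2
  have hm0 : (0:ℝ) < m := by linarith
  set a : ℝ := 1/(m:ℝ) with ha
  set b : ℝ := (k:ℝ) + 2 with hb
  set z : ℝ := 1/(m:ℝ) + 2*k/m with hz
  have ha0 : 0 < a := by positivity
  have ha1 : a ≤ 1 := by rw [ha, div_le_one hm0]; linarith
  have hzb : z ≤ b := by
    have h2 : 2*(k:ℝ)/m ≤ k := by
      rw [div_le_iff₀ hm0]
      nlinarith [Nat.cast_nonneg (α := ℝ) k]
    rw [hz, hb]; linarith
  have haz : a ≤ z := by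
    rw [hz, ha]
    have : 0 ≤ 2*(k:ℝ)/m := by positivity
    linarith
  have hab : a < b := by rw [hb]; nlinarith [Nat.cast_nonneg (α := ℝ) k]
  have hne : b - a ≠ 0 := by intro h; linarith [sub_eq_zero.mp h]
  set t : ℝ := (z - a)/(b - a) with hT
  have ht0 : 0 ≤ t := by apply div_nonneg <;> linarith
  have ht1 : t ≤ 1 := by rw [hT, div_le_one (by linarith)]; linarith
  have hb0 : (0:ℝ) < b := by rw [hb]; positivity
  have key := Real.convexOn_Gamma.2 (Set.mem_Ioi.mpr ha0) (Set.mem_Ioi.mpr hb0)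
    (by linarith : (0:ℝ) ≤ 1 - t) ht0 (by ring)
  have hcomb : (1-t) • a + t • b = z := by
    rw [smul_eq_mul, smul_eq_mul, show (1-t)*a + t*b = a + t*(b-a) from by ring, hT,
      div_mul_cancel₀ _ hne]
    ring
  rw [hcomb] at key
  have hGa : 0 < Real.Gamma a := Real.Gamma_pos_of_pos ha0
  have hGb : 0 < Real.Gamma b := Real.Gamma_pos_of_pos hb0
  have hGbv : Real.Gamma b = (k+1).factorial := by
    rw [hb, show ((k:ℝ) + 2) = ((k+1:ℕ):ℝ) + 1 by push_cast; ring, Real.Gamma_nat_eq_factorial]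
  have hfin : Real.Gamma z ≤ Real.Gamma a + Real.Gamma b := by
    have h1 : (1-t) • Real.Gamma a ≤ Real.Gamma a := by rw [smul_eq_mul]; nlinarith
    have h2 : t • Real.Gamma b ≤ Real.Gamma b := by rw [smul_eq_mul]; nlinarith
    linarith
  rw [hGbv] at hfin
  exact hfin

lemma aux_summable (m : ℕ) (hm2 : 2 ≤ m) (x : ℝ) :
    Summable fun k : ℕ =>
      |Real.Gamma (1/m + 2*k/m) / (k.factorial * Real.Gamma (1/2 + k)) * x ^ k| := by
  have hm0 : (0:ℝ) < m := by
    have : (2:ℝ) ≤ m := by exact_mod_cast hm2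
    linarith
  have hGm : 0 < Real.Gamma (1/(m:ℝ)) := Real.Gamma_pos_of_pos (by positivity)
  have hsp : (0:ℝ) < Real.sqrt π := Real.sqrt_pos.mpr Real.pi_pos
  set C : ℝ := (Real.Gamma (1/(m:ℝ)) + 1)/Real.sqrt π with hC
  have hbound : ∀ k : ℕ,
      |Real.Gamma (1/m + 2*k/m) / (k.factorial * Real.Gamma (1/2 + k)) * x ^ k|
        ≤ C * ((4*|x|) ^ k / k.factorial) := by
    intro k
    have hG : 0 < Real.Gamma (1/(m:ℝ) + 2*k/m) := Real.Gamma_pos_of_pos (by positivity)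
    have hGh : 0 < Real.Gamma (1/2 + (k:ℝ)) := Real.Gamma_pos_of_pos (by positivity)
    have hf : (1:ℝ) ≤ k.factorial := by exact_mod_cast k.factorial_pos
    have hf0 : (0:ℝ) < k.factorial := by linarith
    have habs : |Real.Gamma (1/m + 2*k/m) / (k.factorial * Real.Gamma (1/2 + k)) * x ^ k|
        = Real.Gamma (1/m + 2*(k:ℝ)/m) / (k.factorial * Real.Gamma (1/2 + k)) * |x| ^ k := by
      rw [abs_mul, abs_pow, abs_of_pos (div_pos hG (by positivity))]
    rw [habs]
    have hrhs : C * ((4*|x|)^k / k.factorial)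
        = ((Real.Gamma (1/(m:ℝ)) + 1) * (4*|x|)^k)/((k.factorial:ℝ) * Real.sqrt π) := by
      rw [hC, div_mul_div_comm, mul_comm (Real.sqrt π) ((k.factorial:ℝ))]
    rw [hrhs, div_mul_eq_mul_div, div_le_div_iff₀ (by positivity) (by positivity)]
    have h1 := aux_gamma_half k
    have h2 := aux_gamma_upper m k hm2
    have hk2 : (k:ℝ) + 1 ≤ 2^k := by
      exact_mod_cast Nat.succ_le_of_lt (Nat.lt_two_pow_self (n := k))
    have hfsucc : ((k+1).factorial : ℝ) = ((k:ℝ)+1) * k.factorial := by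
      push_cast [Nat.factorial_succ]; ring
    rw [hfsucc] at h2
    have hX : (0:ℝ) ≤ |x|^k := by positivity
    have h4 : ((4:ℝ)*|x|)^k = 2^k * 2^k * |x|^k := by
      rw [mul_pow, show ((4:ℝ)) = 2*2 by norm_num, mul_pow]
    have h2k : (1:ℝ) ≤ 2^k := by
      have := Nat.cast_nonneg (α := ℝ) k; linarith
    calc Real.Gamma (1/m + 2*(k:ℝ)/m) * |x| ^ k * ((k.factorial:ℝ) * Real.sqrt π)
        = (Real.sqrt π * (k.factorial:ℝ)) * Real.Gamma (1/m + 2*(k:ℝ)/m) * |x|^k := by ring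
      _ ≤ (2^k * Real.Gamma (1/2 + k)) * (Real.Gamma (1/(m:ℝ)) + ((k:ℝ)+1) * k.factorial) * |x|^k := by
          apply mul_le_mul_of_nonneg_right _ hX
          exact mul_le_mul h1 h2 hG.le (by positivity)
      _ ≤ (2^k * Real.Gamma (1/2 + k)) * ((Real.Gamma (1/(m:ℝ)) + 1) * (2^k * k.factorial)) * |x|^k := by
          apply mul_le_mul_of_nonneg_right _ hX
          apply mul_le_mul_of_nonneg_left _ (by positivity)
          have h2kf : (1:ℝ) ≤ 2^k * k.factorial := by nlinarith
          have hg1 : Real.Gamma (1/(m:ℝ)) ≤ Real.Gamma (1/(m:ℝ)) * (2^k * k.factorial) :=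
            le_mul_of_one_le_right hGm.le h2kf
          have hg2 : ((k:ℝ)+1) * k.factorial ≤ 2^k * k.factorial :=
            mul_le_mul_of_nonneg_right hk2 hf0.le
          nlinarith
      _ = (Real.Gamma (1/(m:ℝ)) + 1) * (2^k*2^k*|x|^k) * ((k.factorial:ℝ) * Real.Gamma (1/2 + k)) := by
          ring
      _ = (Real.Gamma (1/(m:ℝ)) + 1) * (4*|x|)^k * ((k.factorial:ℝ) * Real.Gamma (1/2 + k)) := by
          rw [h4]
  apply Summable.of_nonneg_of_le (fun k => abs_nonneg _) hbound
  exact (Real.summable_pow_div_factorial (4*|x|)).mul_left C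

theorem fourier_generalized_gaussian_foxwright (m : ℕ) (hm : Even m) (hm2 : 2 ≤ m)
    (s y : ℝ) (hs : 0 < s) :
    Summable (fun k : ℕ =>
      |Real.Gamma (1 / m + 2 * k / m) / (k.factorial * Real.Gamma (1 / 2 + k)) *
        (-y ^ 2 / (4 * s ^ ((2 : ℝ) / m))) ^ k|) ∧
    ∫ lam : ℝ, Real.cos (lam * y) * Real.exp (-s * lam ^ m) =
      (2 * Real.sqrt π / (m * s ^ ((1 : ℝ) / m))) *
        ∑' k : ℕ, Real.Gamma (1 / m + 2 * k / m) / (k.factorial * Real.Gamma (1 / 2 + k)) *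
          (-y ^ 2 / (4 * s ^ ((2 : ℝ) / m))) ^ k := by
  have h2m : (2:ℝ) ≤ m := by exact_mod_cast hm2
  have hm0 : (0:ℝ) < m := by linarith
  have hsp : (0:ℝ) < Real.sqrt π := Real.sqrt_pos.mpr Real.pi_pos
  set x : ℝ := -y ^ 2 / (4 * s ^ ((2 : ℝ) / m)) with hx
  set t : ℕ → ℝ := fun k =>
    Real.Gamma (1 / m + 2 * k / m) / (k.factorial * Real.Gamma (1 / 2 + k)) * x ^ k with ht
  have hpart1 : Summable fun k => |t k| := aux_summable m hm2 x
  refine ⟨hpart1, ?_⟩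
  set F : ℝ := 2 * Real.sqrt π / (m * s ^ ((1 : ℝ) / m)) with hF
  have hF0 : 0 < F := by
    rw [hF]; positivity
  -- the terms of the series expansion of the integrand
  set f : ℕ → ℝ → ℝ := fun k lam =>
    ((-1)^k * y^(2*k) / (2*k).factorial) * (lam^(2*k) * Real.exp (-s * lam^m)) with hf
  have hgcont : ∀ k : ℕ, Continuous fun lam : ℝ => lam^(2*k) * Real.exp (-s * lam^m) := by
    intro k
    have h1 : Continuous fun lam : ℝ => -s * lam ^ m := continuous_const.mul (continuous_pow m)
    exact (continuous_pow _).mul (Real.continuous_exp.comp h1)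
  have hgnonneg : ∀ (k : ℕ) (lam : ℝ), 0 ≤ lam^(2*k) * Real.exp (-s * lam^m) := by
    intro k lam
    exact mul_nonneg ((even_two_mul k).pow_nonneg lam) (Real.exp_pos _).le
  -- integrability
  have hgint : ∀ k : ℕ, Integrable fun lam : ℝ => lam^(2*k) * Real.exp (-s * lam^m) := by
    intro k
    have hq : (-1:ℝ) < ((2*k:ℕ):ℝ) := by
      have : (0:ℝ) ≤ ((2*k:ℕ):ℝ) := Nat.cast_nonneg _
      linarith
    have hbase := integrable_rpow_mul_exp_neg_mul_sq hs hq
    simp_rw [Real.rpow_natCast] at hbase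
    refine (hbase.const_mul (Real.exp s)).mono' ((hgcont k).aestronglyMeasurable) ?_
    filter_upwards with lam
    rw [Real.norm_of_nonneg (hgnonneg k lam)]
    have hpowle : lam^2 ≤ 1 + lam^m := by
      rcases le_or_gt (|lam|) 1 with h | h
      · have h1 : lam^2 ≤ 1 := by nlinarith [sq_abs lam, abs_nonneg lam]
        have h0 : 0 ≤ lam^m := hm.pow_nonneg lam
        linarith
      · have h2 : |lam|^2 ≤ |lam|^m := pow_le_pow_right₀ h.le hm2
        rw [hm.pow_abs, sq_abs] at h2
        linarith
    have hexp : Real.exp (-s * lam^m) ≤ Real.exp s * Real.exp (-s * lam^2) := by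
      rw [← Real.exp_add, Real.exp_le_exp]
      nlinarith [mul_le_mul_of_nonneg_left hpowle hs.le]
    calc lam^(2*k) * Real.exp (-s * lam^m)
        ≤ lam^(2*k) * (Real.exp s * Real.exp (-s * lam^2)) :=
          mul_le_mul_of_nonneg_left hexp ((even_two_mul k).pow_nonneg lam)
      _ = Real.exp s * (lam^(2*k) * Real.exp (-s * lam^2)) := by ring
  have hint : ∀ k : ℕ, Integrable (f k) := fun k => (hgint k).const_mul _
  -- value of the basic integral
  have hgval : ∀ k : ℕ, ∫ lam : ℝ, lam^(2*k) * Real.exp (-s * lam^m)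
      = 2 * (s ^ (-(((2*k:ℕ):ℝ) + 1)/m) * (1/(m:ℝ)) * Real.Gamma ((((2*k:ℕ):ℝ) + 1)/m)) := by
    intro k
    have step1 : (∫ lam : ℝ, lam^(2*k) * Real.exp (-s * lam^m))
        = ∫ lam : ℝ, (fun u : ℝ => u^(2*k) * Real.exp (-s * u^m)) |lam| := by
      congr 1
      funext lam
      simp only
      rw [(even_two_mul k).pow_abs, hm.pow_abs]
    rw [step1, integral_comp_abs (f := fun u : ℝ => u^(2*k) * Real.exp (-s * u^m))]
    have step2 : (∫ u in Set.Ioi (0:ℝ), u^(2*k) * Real.exp (-s * u^m))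
        = ∫ u in Set.Ioi (0:ℝ), u ^ (((2*k:ℕ):ℝ)) * Real.exp (-s * u ^ ((m:ℕ):ℝ)) := by
      refine setIntegral_congr_fun measurableSet_Ioi (fun u hu => ?_)
      rw [Real.rpow_natCast, Real.rpow_natCast]
    rw [step2, integral_rpow_mul_exp_neg_mul_rpow hm0 (by
        have : (0:ℝ) ≤ ((2*k:ℕ):ℝ) := Nat.cast_nonneg _
        linarith) hs]
  -- the key per-term identity
  have hval : ∀ k : ℕ, ∫ lam : ℝ, f k lam = F * t k := by
    intro k
    have hG : 0 < Real.Gamma (1/(m:ℝ) + 2*k/m) := Real.Gamma_pos_of_pos (by positivity)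
    have hGh : 0 < Real.Gamma (1/2 + (k:ℝ)) := Real.Gamma_pos_of_pos (by positivity)
    have hf0 : (0:ℝ) < k.factorial := by exact_mod_cast k.factorial_pos
    rw [hf]
    simp only
    rw [integral_const_mul, hgval k]
    -- Gamma argument normalization
    have hGarg : ((((2*k:ℕ):ℝ)) + 1)/m = 1/(m:ℝ) + 2*k/m := by push_cast; ring
    rw [hGarg]
    -- Legendre duplication
    have hdup : ((2*k).factorial : ℝ) = Real.Gamma (1/2 + (k:ℝ)) * k.factorial * 4^k / Real.sqrt π := by
      have h := Real.Gamma_mul_Gamma_add_half ((k:ℝ) + 1/2)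
      rw [show ((k:ℝ) + 1/2 + 1/2) = ((k:ℕ):ℝ) + 1 by push_cast; ring,
        Real.Gamma_nat_eq_factorial] at h
      rw [show (2 * ((k:ℝ) + 1/2)) = ((2*k:ℕ):ℝ) + 1 by push_cast; ring,
        Real.Gamma_nat_eq_factorial] at h
      have hexp2 : (2:ℝ) ^ (1 - (((2*k:ℕ):ℝ) + 1)) = (4^k : ℝ)⁻¹ := by
        rw [show (1 - (((2*k:ℕ):ℝ) + 1)) = -(2*(k:ℝ)) by push_cast; ring]
        rw [Real.rpow_neg (by norm_num)]
        congr 1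
        rw [show ((2:ℝ)*k) = ((2*k:ℕ):ℝ) by push_cast; ring, Real.rpow_natCast,
          pow_mul]
        norm_num
      rw [hexp2] at h
      have h4 : (0:ℝ) < 4^k := by positivity
      rw [show ((k:ℝ) + 1/2) = 1/2 + (k:ℝ) by ring] at h
      field_simp at h ⊢
      linarith [h]
    -- power of s decomposition
    have hspow : s ^ (-(((2*k:ℕ):ℝ) + 1)/m)
        = (s ^ ((1:ℝ)/m))⁻¹ * ((s ^ ((2:ℝ)/m))^k)⁻¹ := by
      rw [← Real.rpow_natCast (s ^ ((2:ℝ)/m)) k, ← Real.rpow_mul hs.le,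
        ← Real.rpow_neg hs.le, ← Real.rpow_neg hs.le, ← Real.rpow_add hs]
      congr 1
      push_cast
      field_simp
      ring
    have hxk : x^k = (-1:ℝ)^k * y^(2*k) / (4^k * (s ^ ((2:ℝ)/m))^k) := by
      rw [hx, div_pow, mul_pow, neg_pow, pow_mul]
    rw [ht]
    simp only
    rw [hxk, hdup, hspow, hF]
    have hs1 : (0:ℝ) < s ^ ((1:ℝ)/m) := Real.rpow_pos_of_pos hs _
    have hs2 : (0:ℝ) < (s ^ ((2:ℝ)/m))^k := pow_pos (Real.rpow_pos_of_pos hs _) k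
    have h4 : (0:ℝ) < (4:ℝ)^k := by positivity
    field_simp
  -- norms
  have hnorm : ∀ k : ℕ, ∫ lam : ℝ, ‖f k lam‖ = F * |t k| := by
    intro k
    have hV : 0 ≤ ∫ lam : ℝ, lam^(2*k) * Real.exp (-s * lam^m) :=
      integral_nonneg (fun lam => hgnonneg k lam)
    have e1 : (fun lam : ℝ => ‖f k lam‖)
        = fun lam : ℝ => |(-1:ℝ)^k * y^(2*k) / (2*k).factorial|
            * (lam^(2*k) * Real.exp (-s * lam^m)) := by
      funext lam
      rw [hf]
      simp only [Real.norm_eq_abs, abs_mul]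
      rw [abs_of_nonneg ((even_two_mul k).pow_nonneg lam), abs_of_nonneg (Real.exp_pos _).le]
    rw [e1, integral_const_mul]
    have e3 : ∫ lam : ℝ, f k lam
        = ((-1:ℝ)^k * y^(2*k) / (2*k).factorial) * ∫ lam : ℝ, lam^(2*k) * Real.exp (-s * lam^m) := by
      rw [hf]
      simp only
      rw [integral_const_mul]
    have hkey := hval k
    rw [e3] at hkey
    calc |(-1:ℝ)^k * y^(2*k) / (2*k).factorial| * ∫ lam : ℝ, lam^(2*k) * Real.exp (-s * lam^m)
        = |((-1:ℝ)^k * y^(2*k) / (2*k).factorial) * ∫ lam : ℝ, lam^(2*k) * Real.exp (-s * lam^m)| := by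
          rw [abs_mul, abs_of_nonneg hV]
      _ = |F * t k| := by rw [hkey]
      _ = F * |t k| := by rw [abs_mul, abs_of_pos hF0]
  have hsum : Summable fun k : ℕ => ∫ lam : ℝ, ‖f k lam‖ := by
    have : (fun k : ℕ => ∫ lam : ℝ, ‖f k lam‖) = fun k => F * |t k| := funext hnorm
    rw [this]
    exact hpart1.mul_left F
  have hswap := MeasureTheory.integral_tsum_of_summable_integral_norm hint hsum
  have hcos : ∀ lam : ℝ, ∑' k : ℕ, f k lam = Real.cos (lam * y) * Real.exp (-s * lam^m) := by
    intro lam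
    have e4 : ∀ k : ℕ, f k lam
        = ((-1:ℝ)^k * (lam*y)^(2*k) / (2*k).factorial) * Real.exp (-s * lam^m) := by
      intro k
      rw [hf]
      simp only
      rw [mul_pow]
      ring
    calc ∑' k : ℕ, f k lam
        = ∑' k : ℕ, ((-1:ℝ)^k * (lam*y)^(2*k) / (2*k).factorial) * Real.exp (-s * lam^m) :=
          tsum_congr e4
      _ = (∑' k : ℕ, (-1:ℝ)^k * (lam*y)^(2*k) / (2*k).factorial) * Real.exp (-s * lam^m) :=
          tsum_mul_right
      _ = Real.cos (lam * y) * Real.exp (-s * lam^m) := by rw [← Real.cos_eq_tsum]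
  calc ∫ lam : ℝ, Real.cos (lam * y) * Real.exp (-s * lam^m)
      = ∫ lam : ℝ, ∑' k : ℕ, f k lam := by
        refine integral_congr_ae (Filter.Eventually.of_forall fun lam => ?_)
        exact (hcos lam).symm
    _ = ∑' k : ℕ, ∫ lam : ℝ, f k lam := hswap.symm
    _ = ∑' k : ℕ, F * t k := tsum_congr (fun k => hval k)
    _ = F * ∑' k : ℕ, t k := tsum_mul_left
end

section
/- For any even integer m ≥ 2, κ₀ ∈ (0,1), s > 0, and real y, the integral ∫_{ℝ} |λ|^{κ₀-1} cos(λy) exp(-sλ^m) dλ is finite and equals (2/(m · s^{κ₀/m})) · Σ_{k=0}^∞ [Γ(κ₀/m + 2k/m)/Γ(2k+1)] · (-y²/s^{2/m})^k. -/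
open MeasureTheory Real Set
open scoped ENNReal NNReal

private lemma aux_exp_bound {c s : ℝ} (hs : 0 < s) {m : ℕ} (hm2 : 2 ≤ m) {x : ℝ} (hx : 0 ≤ x) :
    Real.exp (c * x) * Real.exp (-s * x ^ m) ≤
      Real.exp (|c| * max 1 (2 * |c| / s)) * Real.exp (-(s / 2) * x ^ m) := by
  rw [← Real.exp_add, ← Real.exp_add, Real.exp_le_exp]
  have hcx : c * x ≤ |c| * x := mul_le_mul_of_nonneg_right (le_abs_self c) hx
  rcases le_total x (max 1 (2 * |c| / s)) with h | h
  · have h1 : |c| * x ≤ |c| * max 1 (2 * |c| / s) :=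
      mul_le_mul_of_nonneg_left h (abs_nonneg c)
    have h2 : (0 : ℝ) ≤ x ^ m := pow_nonneg hx m
    nlinarith
  · have hx1 : (1 : ℝ) ≤ x := le_trans (le_max_left _ _) h
    have hxc : 2 * |c| / s ≤ x := le_trans (le_max_right _ _) h
    have hxm : x ^ 2 ≤ x ^ m := pow_le_pow_right₀ hx1 hm2
    have h2 : |c| * x ≤ s / 2 * x ^ m := by
      have h3 : 2 * |c| ≤ x * s := by rwa [div_le_iff₀ hs] at hxc
      nlinarith
    have hM0 : (0 : ℝ) ≤ |c| * max 1 (2 * |c| / s) := by positivity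
    nlinarith

private lemma aux_integrable {q c s : ℝ} (hq : -1 < q) (hs : 0 < s) {m : ℕ} (hm2 : 2 ≤ m) :
    IntegrableOn (fun x : ℝ => x ^ q * (Real.exp (c * x) * Real.exp (-s * x ^ m)))
      (Set.Ioi 0) := by
  have hm1 : (1 : ℝ) ≤ (m : ℝ) := by exact_mod_cast le_trans one_le_two hm2
  have hmeas : AEStronglyMeasurable
      (fun x : ℝ => x ^ q * (Real.exp (c * x) * Real.exp (-s * x ^ m)))
      (volume.restrict (Set.Ioi 0)) := by
    refine ContinuousOn.aestronglyMeasurable ?_ measurableSet_Ioi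
    refine ContinuousOn.mul ?_ ?_
    · exact continuousOn_id.rpow_const fun x hx => Or.inl (ne_of_gt hx)
    · exact ((Real.continuous_exp.comp (continuous_const.mul continuous_id)).mul
        (Real.continuous_exp.comp (continuous_const.mul (continuous_pow m)))).continuousOn
  have hint : IntegrableOn (fun x : ℝ => Real.exp (|c| * max 1 (2 * |c| / s)) *
      (x ^ q * Real.exp (-(s / 2) * x ^ (m : ℝ)))) (Set.Ioi 0) :=
    (integrableOn_rpow_mul_exp_neg_mul_rpow hq (by linarith) (by linarith)).const_mul _
  refine Integrable.mono' hint hmeas ?_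
  rw [ae_restrict_iff' measurableSet_Ioi]
  filter_upwards with x hx
  have hx0 : (0 : ℝ) < x := hx
  have hxq : (0 : ℝ) ≤ x ^ q := Real.rpow_nonneg hx0.le q
  rw [Real.norm_eq_abs, abs_of_nonneg (mul_nonneg hxq (by positivity))]
  calc x ^ q * (Real.exp (c * x) * Real.exp (-s * x ^ m))
      ≤ x ^ q * (Real.exp (|c| * max 1 (2 * |c| / s)) * Real.exp (-(s / 2) * x ^ m)) :=
        mul_le_mul_of_nonneg_left (aux_exp_bound hs hm2 hx0.le) hxq
    _ = Real.exp (|c| * max 1 (2 * |c| / s)) * (x ^ q * Real.exp (-(s / 2) * x ^ (m : ℝ))) := by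
        rw [Real.rpow_natCast x m]; ring

theorem singular_fourier_generalized_gaussian (m : ℕ) (hm : Even m) (hm2 : 2 ≤ m)
    (κ₀ s y : ℝ) (hκ : κ₀ ∈ Set.Ioo (0 : ℝ) 1) (hs : 0 < s) :
    Integrable (fun lam : ℝ => |lam| ^ (κ₀ - 1) * Real.cos (lam * y) * Real.exp (-s * lam ^ m)) ∧
    ∫ lam : ℝ, |lam| ^ (κ₀ - 1) * Real.cos (lam * y) * Real.exp (-s * lam ^ m) =
      (2 / (m * s ^ (κ₀ / m))) *
        ∑' k : ℕ, Real.Gamma (κ₀ / m + 2 * k / m) / Real.Gamma (2 * k + 1) *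
          (-y ^ 2 / s ^ ((2 : ℝ) / m)) ^ k := by
  obtain ⟨hκ0, hκ1⟩ := hκ
  have hq : (-1 : ℝ) < κ₀ - 1 := by linarith
  have hm0 : (0 : ℝ) < (m : ℝ) := by exact_mod_cast lt_of_lt_of_le two_pos hm2
  set F : ℝ → ℝ := fun x => x ^ (κ₀ - 1) * Real.cos (x * y) * Real.exp (-s * x ^ m) with hFdef
  set fk : ℕ → ℝ → ℝ := fun k x =>
    x ^ (κ₀ - 1) * ((-1) ^ k * (x * y) ^ (2 * k) / ((2 * k).factorial : ℝ)) * Real.exp (-s * x ^ m)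
    with hfkdef
  have habs : ∀ lam : ℝ, |lam| ^ (κ₀ - 1) * Real.cos (lam * y) * Real.exp (-s * lam ^ m)
      = F |lam| := by
    intro lam
    simp only [hFdef]
    rw [hm.pow_abs]
    rcases le_or_gt 0 lam with h | h
    · rw [abs_of_nonneg h]
    · rw [abs_of_neg h, show -lam * y = -(lam * y) by ring, Real.cos_neg]
  have hfun : (fun lam : ℝ => |lam| ^ (κ₀ - 1) * Real.cos (lam * y) * Real.exp (-s * lam ^ m))
      = fun lam => F |lam| := funext habs
  have hcont_rpow : ContinuousOn (fun x : ℝ => x ^ (κ₀ - 1)) (Set.Ioi 0) :=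
    continuousOn_id.rpow_const fun x hx => Or.inl (ne_of_gt hx)
  have hcont_exp : Continuous (fun x : ℝ => Real.exp (-s * x ^ m)) :=
    Real.continuous_exp.comp (continuous_const.mul (continuous_pow m))
  -- integrability of F on Ioi 0
  have hFint : IntegrableOn F (Set.Ioi 0) := by
    refine Integrable.mono' (aux_integrable (c := 0) hq hs hm2) ?_ ?_
    · refine ContinuousOn.aestronglyMeasurable ?_ measurableSet_Ioi
      exact (hcont_rpow.mul
        (Real.continuous_cos.comp (continuous_id.mul continuous_const)).continuousOn).mul
        hcont_exp.continuousOn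
    · rw [ae_restrict_iff' measurableSet_Ioi]
      filter_upwards with x hx
      have hx0 : (0 : ℝ) < x := hx
      have hxq : (0 : ℝ) ≤ x ^ (κ₀ - 1) := Real.rpow_nonneg hx0.le _
      simp only [hFdef]
      rw [Real.norm_eq_abs, abs_mul, abs_mul, abs_of_nonneg hxq,
        abs_of_pos (Real.exp_pos _), zero_mul, Real.exp_zero, one_mul]
      have hcos : |Real.cos (x * y)| ≤ 1 := Real.abs_cos_le_one _
      have hle := mul_le_mul_of_nonneg_right (mul_le_mul_of_nonneg_left hcos hxq)
        (Real.exp_nonneg (-s * x ^ m))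
      simpa using hle
  -- integrability on all of ℝ
  have hIoi : IntegrableOn (fun lam : ℝ => F |lam|) (Set.Ioi 0) :=
    hFint.congr_fun (fun x hx => by rw [abs_of_pos hx]) measurableSet_Ioi
  have hIic : IntegrableOn (fun lam : ℝ => F |lam|) (Set.Iic 0) := by
    rw [← Measure.map_neg_eq_self (volume : Measure ℝ)]
    have hembed : MeasurableEmbedding (fun x : ℝ => -x) :=
      (Homeomorph.neg ℝ).measurableEmbedding
    rw [hembed.integrableOn_map_iff]
    simp_rw [Function.comp_def, abs_neg, neg_preimage, neg_Iic, neg_zero]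
    exact Iff.mpr integrableOn_Ici_iff_integrableOn_Ioi hIoi
  have hInt : Integrable (fun lam : ℝ => F |lam|) := by
    rw [← integrableOn_univ, ← Set.Iic_union_Ioi (a := (0 : ℝ))]
    exact hIic.union hIoi
  -- measurability of each fk
  have hmeas_k : ∀ k : ℕ, AEStronglyMeasurable (fk k) (volume.restrict (Set.Ioi 0)) := by
    intro k
    refine ContinuousOn.aestronglyMeasurable ?_ measurableSet_Ioi
    refine ((hcont_rpow.mul ?_).mul hcont_exp.continuousOn)
    exact ((continuous_const.mul ((continuous_id.mul continuous_const).pow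
      (2 * k))).div_const _).continuousOn
  -- finiteness of the sum of lintegrals
  have hgint : IntegrableOn
      (fun x : ℝ => x ^ (κ₀ - 1) * (Real.exp (|y| * x) * Real.exp (-s * x ^ m)))
      (Set.Ioi 0) := aux_integrable hq hs hm2
  have hfin : ∑' k : ℕ, ∫⁻ x, ‖fk k x‖₊ ∂(volume.restrict (Set.Ioi 0)) ≠ ⊤ := by
    rw [← lintegral_tsum (f := fun k x => (‖fk k x‖₊ : ℝ≥0∞)) fun k => (hmeas_k k).enorm]
    have hb : ∀ x ∈ Set.Ioi (0 : ℝ), (∑' k : ℕ, (‖fk k x‖₊ : ℝ≥0∞)) ≤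
        ENNReal.ofReal (x ^ (κ₀ - 1) * (Real.exp (|y| * x) * Real.exp (-s * x ^ m))) := by
      intro x hx
      have hx0 : (0 : ℝ) < x := hx
      have hxq : (0 : ℝ) ≤ x ^ (κ₀ - 1) := Real.rpow_nonneg hx0.le _
      have hterm : ∀ k : ℕ, (‖fk k x‖₊ : ℝ≥0∞) =
          ENNReal.ofReal (x ^ (κ₀ - 1) * (|x * y| ^ (2 * k) / ((2 * k).factorial : ℝ)) *
            Real.exp (-s * x ^ m)) := by
        intro k
        rw [← enorm_eq_nnnorm, ← ofReal_norm]
        congr 1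
        simp only [hfkdef]
        rw [Real.norm_eq_abs, abs_mul, abs_mul, abs_of_nonneg hxq,
          abs_of_pos (Real.exp_pos _), abs_div, abs_mul, abs_pow, abs_pow, abs_neg, abs_one,
          one_pow, one_mul, Nat.abs_cast]
      rw [tsum_congr hterm]
      have hsummable : Summable (fun k : ℕ =>
          x ^ (κ₀ - 1) * (|x * y| ^ (2 * k) / ((2 * k).factorial : ℝ)) * Real.exp (-s * x ^ m)) :=
        (((Real.hasSum_cosh |x * y|).summable.mul_left _).mul_right _)
      rw [← ENNReal.ofReal_tsum_of_nonneg (fun k => by positivity) hsummable]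
      apply ENNReal.ofReal_le_ofReal
      have htsum : (∑' k : ℕ, x ^ (κ₀ - 1) * (|x * y| ^ (2 * k) / ((2 * k).factorial : ℝ)) *
          Real.exp (-s * x ^ m)) =
          x ^ (κ₀ - 1) * Real.cosh |x * y| * Real.exp (-s * x ^ m) := by
        rw [tsum_mul_right, tsum_mul_left, ← Real.cosh_eq_tsum]
      rw [htsum]
      have hch : Real.cosh |x * y| ≤ Real.exp (|y| * x) := by
        have h1 : Real.cosh |x * y| ≤ Real.exp |x * y| := by
          rw [Real.cosh_eq]
          have h2 : Real.exp (-|x * y|) ≤ Real.exp |x * y| :=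
            Real.exp_le_exp.mpr (neg_le_self (abs_nonneg _))
          linarith
        have h3 : |x * y| = |y| * x := by rw [abs_mul, abs_of_pos hx0, mul_comm]
        rw [h3] at h1
        rwa [h3]
      calc x ^ (κ₀ - 1) * Real.cosh |x * y| * Real.exp (-s * x ^ m)
          ≤ x ^ (κ₀ - 1) * Real.exp (|y| * x) * Real.exp (-s * x ^ m) :=
            mul_le_mul_of_nonneg_right (mul_le_mul_of_nonneg_left hch hxq)
              (Real.exp_nonneg _)
        _ = x ^ (κ₀ - 1) * (Real.exp (|y| * x) * Real.exp (-s * x ^ m)) := by ring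
    refine ne_of_lt (lt_of_le_of_lt ?_ hgint.lintegral_lt_top)
    exact lintegral_mono_ae ((ae_restrict_iff' measurableSet_Ioi).2 (ae_of_all _ hb))
  -- expand F into the series on Ioi 0
  have hFtsum : Set.EqOn F (fun x => ∑' k : ℕ, fk k x) (Set.Ioi 0) := by
    intro x hx
    simp only [hFdef, hfkdef]
    rw [Real.cos_eq_tsum (x * y), ← tsum_mul_left, ← tsum_mul_right]
  have hswap : ∫ x in Set.Ioi (0 : ℝ), F x = ∑' k : ℕ, ∫ x in Set.Ioi (0 : ℝ), fk k x := by
    rw [setIntegral_congr_fun measurableSet_Ioi hFtsum]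
    exact integral_tsum hmeas_k hfin
  -- compute each integral
  have hval : ∀ k : ℕ, ∫ x in Set.Ioi (0 : ℝ), fk k x =
      ((-1) ^ k * y ^ (2 * k) / ((2 * k).factorial : ℝ)) *
        (s ^ (-(κ₀ - 1 + (2 * k : ℕ) + 1) / (m : ℝ)) * (1 / (m : ℝ)) *
          Real.Gamma ((κ₀ - 1 + (2 * k : ℕ) + 1) / (m : ℝ))) := by
    intro k
    have hq2 : (-1 : ℝ) < κ₀ - 1 + (2 * k : ℕ) := by
      have h0 : (0 : ℝ) ≤ ((2 * k : ℕ) : ℝ) := Nat.cast_nonneg _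
      linarith
    have h1 : Set.EqOn (fk k) (fun x => ((-1) ^ k * y ^ (2 * k) / ((2 * k).factorial : ℝ)) *
        (x ^ (κ₀ - 1 + (2 * k : ℕ)) * Real.exp (-s * x ^ (m : ℝ)))) (Set.Ioi 0) := by
      intro x hx
      have hx0 : (0 : ℝ) < x := hx
      simp only [hfkdef]
      rw [Real.rpow_add hx0, Real.rpow_natCast, Real.rpow_natCast, mul_pow]
      ring
    rw [setIntegral_congr_fun measurableSet_Ioi h1, integral_const_mul,
      integral_rpow_mul_exp_neg_mul_rpow hm0 hq2 hs]
  constructor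
  · rw [hfun]; exact hInt
  · rw [hfun, integral_comp_abs (f := F), hswap, tsum_congr hval,
      ← tsum_mul_left, ← tsum_mul_left]
    refine tsum_congr fun k => ?_
    have hGarg : (κ₀ - 1 + ((2 * k : ℕ) : ℝ) + 1) / (m : ℝ) = κ₀ / m + 2 * (k : ℝ) / m := by
      push_cast; ring
    have hGfact : Real.Gamma (2 * (k : ℝ) + 1) = ((2 * k).factorial : ℝ) := by
      rw [show (2 * (k : ℝ) + 1) = ((2 * k : ℕ) : ℝ) + 1 by push_cast; ring,
        Real.Gamma_nat_eq_factorial]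
    have hsplit : s ^ (-(κ₀ - 1 + ((2 * k : ℕ) : ℝ) + 1) / (m : ℝ)) =
        (s ^ (κ₀ / (m : ℝ)))⁻¹ * ((s ^ ((2 : ℝ) / (m : ℝ))) ^ k)⁻¹ := by
      rw [show -(κ₀ - 1 + ((2 * k : ℕ) : ℝ) + 1) / (m : ℝ) =
          -(κ₀ / m) + -((2 : ℝ) / m * k) by push_cast; ring,
        Real.rpow_add hs, Real.rpow_neg hs.le, Real.rpow_neg hs.le, Real.rpow_mul hs.le,
        Real.rpow_natCast]
    have hppow : (-y ^ 2 / s ^ ((2 : ℝ) / (m : ℝ))) ^ k =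
        ((-1) ^ k * y ^ (2 * k)) / (s ^ ((2 : ℝ) / (m : ℝ))) ^ k := by
      rw [div_pow, show -y ^ 2 = (-1) * y ^ 2 by ring, mul_pow, pow_mul]
    rw [hGarg, hGfact, hsplit, hppow]
    have hf0 : ((2 * k).factorial : ℝ) ≠ 0 := by
      exact_mod_cast (Nat.factorial_pos (2 * k)).ne'
    have hs1 : s ^ (κ₀ / (m : ℝ)) ≠ 0 := (Real.rpow_pos_of_pos hs _).ne'
    have hs2 : (s ^ ((2 : ℝ) / (m : ℝ))) ^ k ≠ 0 :=
      pow_ne_zero _ (Real.rpow_pos_of_pos hs _).ne'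
    have hG0 : Real.Gamma (κ₀ / (m : ℝ) + 2 * (k : ℝ) / (m : ℝ)) ≠ 0 := by
      refine (Real.Gamma_pos_of_pos ?_).ne'
      positivity
    field_simp
end

section
/- For κ ∈ (0,1), the function θ_κ defined on (0,∞) by θ_κ(u) = 1 - (c₁(κ)/c₂(κ)) K_{(κ-1)/2}(u) u^{(1-κ)/2}, where c₁(κ) = 2^{(1-κ)/2}/(√π Γ(κ/2)) and c₂(κ) = 1/(2Γ(κ)cos(κπ/2)), satisfies |θ_κ(u)| ≤ 1 for all u > 0 and θ_κ(u) → 0 as u → 0⁺. -/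
open MeasureTheory Real Filter

/-- Modified Bessel function of the second kind, via its integral representation. -/
noncomputable def besselK (ν z : ℝ) : ℝ :=
  ∫ t in Set.Ioi (0 : ℝ), Real.exp (-z * Real.cosh t) * Real.cosh (ν * t)

/-- `c₁(κ) = 2^((1-κ)/2) / (√π Γ(κ/2))`. -/
noncomputable def c1 (κ : ℝ) : ℝ := 2 ^ ((1 - κ) / 2) / (Real.sqrt π * Real.Gamma (κ / 2))

/-- `c₂(κ) = 1 / (2 Γ(κ) cos(κπ/2))`. -/
noncomputable def c2 (κ : ℝ) : ℝ := 1 / (2 * Real.Gamma κ * Real.cos (κ * π / 2))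

open Set in
lemma integrable_aux (b c : ℝ) (hc : 0 < c) :
    IntegrableOn (fun t : ℝ => Real.exp (-(c * Real.exp t) + b * t)) (Set.Ioi 0) := by
  apply integrable_of_isBigO_exp_neg one_pos
  · exact (Real.continuous_exp.comp (by continuity)).continuousOn
  · rw [Asymptotics.isBigO_iff]
    refine ⟨1, ?_⟩
    have h0 : Tendsto (fun t : ℝ => t / Real.exp t) atTop (nhds 0) := by
      exact (Real.tendsto_exp_div_pow_atTop 1).inv_tendsto_atTop.congr fun x => by simp [inv_div]
    have h1 : Tendsto (fun t : ℝ => c * Real.exp t - (b + 1) * t) atTop atTop := by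
      have : Tendsto (fun t : ℝ => Real.exp t * (c - (b + 1) * (t / Real.exp t))) atTop atTop := by
        apply Filter.Tendsto.atTop_mul_pos hc Real.tendsto_exp_atTop
        simpa using (tendsto_const_nhds (x := c)).sub ((h0.const_mul (b+1)))
      refine this.congr' ?_
      filter_upwards [eventually_gt_atTop (0:ℝ)] with t ht
      field_simp
    filter_upwards [h1.eventually_ge_atTop 0] with t ht
    rw [Real.norm_eq_abs, Real.norm_eq_abs, abs_of_pos (Real.exp_pos _),
      abs_of_pos (Real.exp_pos _), one_mul, Real.exp_le_exp]
    linarith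

open Set in
lemma subst_aux (a c : ℝ) (hc : 0 < c) :
    ∫ s in Set.Ioi c, Real.exp (-s) * s ^ (a - 1) =
      c ^ a * ∫ t in Set.Ioi (0:ℝ), Real.exp (-(c * Real.exp t) + a * t) := by
  have himg : (fun t => c * Real.exp t) '' Set.Ioi 0 = Set.Ioi c := by
    ext s
    constructor
    · rintro ⟨t, ht, rfl⟩
      have h1 : (1:ℝ) < Real.exp t := by
        rw [show (1:ℝ) = Real.exp 0 by simp]
        exact Real.exp_lt_exp.mpr ht
      have := mul_lt_mul_of_pos_left h1 hc
      simpa using this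
    · intro hs
      refine ⟨Real.log (s / c), ?_, ?_⟩
      · have : (1:ℝ) < s / c := (one_lt_div hc).mpr hs
        exact Real.log_pos this
      · have hs0 : (0:ℝ) < s / c := div_pos (hc.trans hs) hc
        simp only []
        rw [Real.exp_log hs0]
        field_simp
  have hderiv : ∀ t ∈ Set.Ioi (0:ℝ), HasDerivWithinAt (fun t => c * Real.exp t)
      (c * Real.exp t) (Set.Ioi 0) t := fun t _ =>
    ((Real.hasDerivAt_exp t).const_mul c).hasDerivWithinAt
  have hinj : Set.InjOn (fun t => c * Real.exp t) (Set.Ioi 0) := fun x _ y _ h =>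
    Real.exp_injective (mul_left_cancel₀ hc.ne' h)
  rw [← himg, integral_image_eq_integral_abs_deriv_smul measurableSet_Ioi hderiv hinj,
    ← integral_const_mul]
  apply setIntegral_congr_fun measurableSet_Ioi
  intro t _
  simp only []
  have he : (0:ℝ) < Real.exp t := Real.exp_pos t
  have hce : (0:ℝ) < c * Real.exp t := by positivity
  rw [smul_eq_mul, abs_of_pos hce]
  rw [Real.rpow_sub hce, Real.rpow_one, Real.mul_rpow hc.le he.le,
    Real.rpow_def_of_pos he, Real.log_exp, Real.exp_add]
  rw [Real.exp_neg (c * Real.exp t)]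
  have : Real.exp (t * a) = Real.exp (a * t) := by ring_nf
  rw [this]
  field_simp

open Set in
lemma I_le_Gamma {a : ℝ} (ha : 0 < a) {c : ℝ} (hc : 0 ≤ c) :
    ∫ s in Set.Ioi c, Real.exp (-s) * s ^ (a - 1) ≤ Real.Gamma a := by
  rw [Real.Gamma_eq_integral ha]
  apply setIntegral_mono_set (Real.GammaIntegral_convergent ha)
  · filter_upwards [ae_restrict_mem measurableSet_Ioi] with s hs
    have : (0:ℝ) < s := hs
    positivity
  · exact (Set.Ioi_subset_Ioi hc).eventuallyLE

lemma I_nonneg (a : ℝ) {c : ℝ} (hc : 0 ≤ c) :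
    0 ≤ ∫ s in Set.Ioi c, Real.exp (-s) * s ^ (a - 1) := by
  apply setIntegral_nonneg measurableSet_Ioi
  intro s hs
  have : (0:ℝ) < s := lt_of_le_of_lt hc hs
  positivity

lemma I_tendsto {a : ℝ} (ha : 0 < a) :
    Tendsto (fun c => ∫ s in Set.Ioi c, Real.exp (-s) * s ^ (a - 1))
      (nhdsWithin 0 (Set.Ioi 0)) (nhds (Real.Gamma a)) := by
  have hpow : Tendsto (fun c : ℝ => Real.Gamma a - c ^ a / a)
      (nhdsWithin 0 (Set.Ioi 0)) (nhds (Real.Gamma a)) := by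
    have h1 : Tendsto (fun c : ℝ => c ^ a) (nhds 0) (nhds 0) := by
      have := (Real.continuousAt_rpow_const 0 a (Or.inr ha.le)).tendsto
      rwa [Real.zero_rpow ha.ne'] at this
    have := (tendsto_const_nhds (x := Real.Gamma a)).sub ((h1.div_const a))
    simpa using this.mono_left nhdsWithin_le_nhds
  refine tendsto_of_tendsto_of_tendsto_of_le_of_le' hpow tendsto_const_nhds ?_ ?_
  · filter_upwards [self_mem_nhdsWithin] with c (hc : 0 < c)
    -- Gamma a - c^a/a ≤ I c
    have hsplit : Real.Gamma a = (∫ s in Set.Ioc 0 c, Real.exp (-s) * s ^ (a - 1)) +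
        ∫ s in Set.Ioi c, Real.exp (-s) * s ^ (a - 1) := by
      rw [Real.Gamma_eq_integral ha, ← Set.Ioc_union_Ioi_eq_Ioi hc.le,
        setIntegral_union (Set.Ioc_disjoint_Ioi le_rfl) measurableSet_Ioi
          ((Real.GammaIntegral_convergent ha).mono_set Set.Ioc_subset_Ioi_self)
          ((Real.GammaIntegral_convergent ha).mono_set (Set.Ioi_subset_Ioi hc.le))]
    have hJ : (∫ s in Set.Ioc 0 c, Real.exp (-s) * s ^ (a - 1)) ≤ c ^ a / a := by
      have h2 : (∫ s in Set.Ioc 0 c, Real.exp (-s) * s ^ (a - 1)) ≤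
          ∫ s in Set.Ioc 0 c, s ^ (a - 1) := by
        apply setIntegral_mono_on
        · exact (Real.GammaIntegral_convergent ha).mono_set Set.Ioc_subset_Ioi_self
        · exact (intervalIntegral.intervalIntegrable_rpow' (by linarith)).1
        · exact measurableSet_Ioc
        · intro s hs
          have hs0 : (0:ℝ) < s := hs.1
          have : Real.exp (-s) ≤ 1 := Real.exp_le_one_iff.mpr (by linarith)
          nlinarith [Real.rpow_nonneg hs0.le (a-1), this]
      have h3 : (∫ s in Set.Ioc 0 c, s ^ (a - 1)) = c ^ a / a := by
        rw [← intervalIntegral.integral_of_le hc.le,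
          integral_rpow (Or.inl (by linarith : (-1:ℝ) < a - 1))]
        rw [Real.zero_rpow (by linarith : a - 1 + 1 ≠ 0)]
        norm_num
      linarith
    linarith
  · filter_upwards [self_mem_nhdsWithin] with c (hc : 0 < c)
    exact I_le_Gamma ha hc.le

lemma const_id {κ : ℝ} (hκ0 : 0 < κ) (hκ1 : κ < 1) :
    (c1 κ / c2 κ) * (2 ^ ((1 - κ) / 2 - 1) * Real.Gamma ((1 - κ) / 2)) = 1 := by
  have hπ : 0 < π := Real.pi_pos
  have hcos : 0 < Real.cos (κ * π / 2) := by
    apply Real.cos_pos_of_mem_Ioo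
    constructor <;> nlinarith
  have hG2 : 0 < Real.Gamma (κ / 2) := Real.Gamma_pos_of_pos (by linarith)
  have hGk : 0 < Real.Gamma κ := Real.Gamma_pos_of_pos hκ0
  have hGa : 0 < Real.Gamma ((1 - κ) / 2) := Real.Gamma_pos_of_pos (by linarith)
  have hsqrt : (0:ℝ) < Real.sqrt π := Real.sqrt_pos.mpr hπ
  have h3 : Real.sqrt π * Real.sqrt π = π := Real.mul_self_sqrt hπ.le
  have h1 := Real.Gamma_mul_Gamma_add_half (κ / 2)
  rw [show 2 * (κ / 2) = κ by ring, show κ / 2 + 1 / 2 = (κ + 1) / 2 by ring] at h1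
  have h2 := Real.Gamma_mul_Gamma_one_sub ((κ + 1) / 2)
  rw [show (1 : ℝ) - (κ + 1) / 2 = (1 - κ) / 2 by ring,
    show π * ((κ + 1) / 2) = κ * π / 2 + π / 2 by ring, Real.sin_add_pi_div_two] at h2
  have h2' : Real.Gamma ((κ + 1) / 2) * Real.Gamma ((1 - κ) / 2) * Real.cos (κ * π / 2) = π := by
    rw [h2]; exact div_mul_cancel₀ π hcos.ne'
  have hpow : (2:ℝ) ^ ((1 - κ) / 2) * (2:ℝ) ^ ((1 - κ) / 2 - 1) * 2 = 2 ^ ((1:ℝ) - κ) := by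
    rw [← Real.rpow_add two_pos, ← Real.rpow_add_one (two_ne_zero)]
    congr 1
    ring
  have key : (2:ℝ) ^ ((1:ℝ) - κ) * Real.Gamma κ * Real.cos (κ * π / 2) *
      Real.Gamma ((1 - κ) / 2) = Real.sqrt π * Real.Gamma (κ / 2) := by
    have key' : Real.sqrt π * ((2:ℝ) ^ ((1:ℝ) - κ) * Real.Gamma κ * Real.cos (κ * π / 2) *
        Real.Gamma ((1 - κ) / 2)) = Real.sqrt π * (Real.sqrt π * Real.Gamma (κ / 2)) := by
      linear_combination (Real.cos (κ * π / 2) * Real.Gamma ((1 - κ) / 2)) * h1.symm +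
        Real.Gamma (κ / 2) * h2' - Real.Gamma (κ / 2) * h3
    exact mul_left_cancel₀ hsqrt.ne' key'
  unfold c1 c2
  rw [one_div, div_inv_eq_mul]
  field_simp
  rw [show ((1:ℝ) - κ - 2) / 2 = (1 - κ) / 2 - 1 by ring]
  linear_combination (Real.Gamma κ * Real.cos (κ * π / 2) * Real.Gamma ((1 - κ) / 2)) * hpow + key

lemma main_est {a u : ℝ} (ha : 0 < a) (hu : 0 < u) :
    0 ≤ (∫ t in Set.Ioi (0:ℝ), Real.exp (-u * Real.cosh t) * Real.cosh (a * t)) ∧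
    u ^ a * (∫ t in Set.Ioi (0:ℝ), Real.exp (-u * Real.cosh t) * Real.cosh (a * t)) ≤
      2 ^ a * Real.Gamma a ∧
    Real.exp (-(u / 2)) * (2 ^ (a - 1) *
        ∫ s in Set.Ioi (u / 2), Real.exp (-s) * s ^ (a - 1)) ≤
      u ^ a * (∫ t in Set.Ioi (0:ℝ), Real.exp (-u * Real.cosh t) * Real.cosh (a * t)) ∧
    u ^ a * (∫ t in Set.Ioi (0:ℝ), Real.exp (-u * Real.cosh t) * Real.cosh (a * t)) ≤
      2 ^ (a - 1) * (∫ s in Set.Ioi (u / 2), Real.exp (-s) * s ^ (a - 1)) +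
      u ^ a * ((∫ t in Set.Ioi (0:ℝ), Real.exp (-(a * t))) / 2) := by
  have hc : 0 < u / 2 := by linarith
  have hpt : ∀ t ∈ Set.Ioi (0:ℝ),
      0 ≤ Real.exp (-u * Real.cosh t) * Real.cosh (a * t) ∧
      Real.exp (-u * Real.cosh t) * Real.cosh (a * t) ≤
        Real.exp (-(u / 2 * Real.exp t) + a * t) ∧
      Real.exp (-u * Real.cosh t) * Real.cosh (a * t) ≤
        Real.exp (-(u / 2 * Real.exp t) + a * t) / 2 + Real.exp (-(a * t)) / 2 ∧
      Real.exp (-(u / 2)) / 2 * Real.exp (-(u / 2 * Real.exp t) + a * t) ≤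
        Real.exp (-u * Real.cosh t) * Real.cosh (a * t) := by
    intro t ht
    have ht0 : 0 ≤ t := le_of_lt ht
    have hat : 0 ≤ a * t := by positivity
    have hch := Real.cosh_eq t
    have hcha := Real.cosh_eq (a * t)
    have hie1 : Real.exp (-t) ≤ 1 := Real.exp_le_one_iff.mpr (by linarith)
    have hie2 : Real.exp (-(a * t)) ≤ 1 := Real.exp_le_one_iff.mpr (by linarith)
    have hue1 : (1:ℝ) ≤ Real.exp (a * t) := Real.one_le_exp hat
    have hp1 : (0:ℝ) < Real.exp t := Real.exp_pos t
    have hp2 : (0:ℝ) < Real.exp (-t) := Real.exp_pos _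
    have hp3 : (0:ℝ) < Real.exp (a * t) := Real.exp_pos _
    have hp4 : (0:ℝ) < Real.exp (-(a * t)) := Real.exp_pos _
    have hmono1 : Real.exp (-u * Real.cosh t) ≤ Real.exp (-(u / 2 * Real.exp t)) := by
      apply Real.exp_le_exp.mpr
      rw [hch]
      nlinarith
    have hmono2 : Real.exp (-u * Real.cosh t) ≤ 1 :=
      Real.exp_le_one_iff.mpr (by nlinarith [Real.cosh_pos t])
    have hmono3 : Real.exp (-(u / 2)) * Real.exp (-(u / 2 * Real.exp t)) ≤
        Real.exp (-u * Real.cosh t) := by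
      rw [← Real.exp_add]
      apply Real.exp_le_exp.mpr
      rw [hch]
      nlinarith [mul_le_mul_of_nonneg_left hie1 hu.le]
    have hchb : Real.exp (a * t) / 2 ≤ Real.cosh (a * t) := by rw [hcha]; nlinarith
    have hchu : Real.cosh (a * t) ≤ Real.exp (a * t) := by rw [hcha]; nlinarith
    have hepos : (0:ℝ) < Real.exp (-u * Real.cosh t) := Real.exp_pos _
    refine ⟨by positivity, ?_, ?_, ?_⟩
    · rw [Real.exp_add]
      exact mul_le_mul hmono1 hchu (Real.cosh_pos _).le (Real.exp_pos _).le
    · rw [Real.exp_add, hcha]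
      nlinarith [mul_le_mul_of_nonneg_right hmono1 hp3.le,
        mul_le_mul_of_nonneg_right hmono2 hp4.le]
    · rw [Real.exp_add]
      nlinarith [mul_le_mul_of_nonneg_right hmono3 hp3.le,
        mul_le_mul_of_nonneg_left hchb hepos.le]
  have hIntE := integrable_aux a (u / 2) hc
  have hcont : Continuous fun t : ℝ => Real.exp (-u * Real.cosh t) * Real.cosh (a * t) := by
    fun_prop
  have hIntB : IntegrableOn (fun t : ℝ => Real.exp (-u * Real.cosh t) * Real.cosh (a * t))
      (Set.Ioi 0) := by
    refine hIntE.mono' hcont.aestronglyMeasurable ?_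
    filter_upwards [ae_restrict_mem measurableSet_Ioi] with t ht
    rw [Real.norm_eq_abs, abs_of_nonneg (hpt t ht).1]
    exact (hpt t ht).2.1
  have hBE : (∫ t in Set.Ioi (0:ℝ), Real.exp (-u * Real.cosh t) * Real.cosh (a * t)) ≤
      ∫ t in Set.Ioi (0:ℝ), Real.exp (-(u / 2 * Real.exp t) + a * t) := by
    refine integral_mono_of_nonneg ?_ hIntE ?_ <;>
      filter_upwards [ae_restrict_mem measurableSet_Ioi] with t ht
    · exact (hpt t ht).1
    · exact (hpt t ht).2.1
  have hKint : IntegrableOn (fun t : ℝ => Real.exp (-(a * t))) (Set.Ioi 0) := by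
    simpa [neg_mul] using exp_neg_integrableOn_Ioi 0 ha
  have hBsplit : (∫ t in Set.Ioi (0:ℝ), Real.exp (-u * Real.cosh t) * Real.cosh (a * t)) ≤
      (∫ t in Set.Ioi (0:ℝ), Real.exp (-(u / 2 * Real.exp t) + a * t)) / 2 +
      (∫ t in Set.Ioi (0:ℝ), Real.exp (-(a * t))) / 2 := by
    have h1 : (∫ t in Set.Ioi (0:ℝ), Real.exp (-u * Real.cosh t) * Real.cosh (a * t)) ≤
        ∫ t in Set.Ioi (0:ℝ),
          (Real.exp (-(u / 2 * Real.exp t) + a * t) / 2 + Real.exp (-(a * t)) / 2) := by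
      refine integral_mono_of_nonneg ?_ ((hIntE.div_const 2).add (hKint.div_const 2)) ?_ <;>
        filter_upwards [ae_restrict_mem measurableSet_Ioi] with t ht
      · exact (hpt t ht).1
      · exact (hpt t ht).2.2.1
    rwa [integral_add (hIntE.div_const 2) (hKint.div_const 2), integral_div, integral_div] at h1
  have hlowint : Real.exp (-(u / 2)) / 2 *
      (∫ t in Set.Ioi (0:ℝ), Real.exp (-(u / 2 * Real.exp t) + a * t)) ≤
      ∫ t in Set.Ioi (0:ℝ), Real.exp (-u * Real.cosh t) * Real.cosh (a * t) := by
    have h1 : (∫ t in Set.Ioi (0:ℝ),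
        Real.exp (-(u / 2)) / 2 * Real.exp (-(u / 2 * Real.exp t) + a * t)) ≤
        ∫ t in Set.Ioi (0:ℝ), Real.exp (-u * Real.cosh t) * Real.cosh (a * t) := by
      refine integral_mono_of_nonneg ?_ hIntB ?_ <;>
        filter_upwards [ae_restrict_mem measurableSet_Ioi] with t ht
      · positivity
      · exact (hpt t ht).2.2.2
    rwa [integral_const_mul] at h1
  -- algebra
  have hsub := subst_aux a (u / 2) hc
  have hua : u ^ a = 2 ^ a * (u / 2) ^ a := by
    rw [← Real.mul_rpow (by norm_num) hc.le]
    congr 1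
    ring
  have h2pow : (2:ℝ) ^ a = 2 ^ (a - 1) * 2 := by
    rw [← Real.rpow_add_one two_ne_zero]
    congr 1
    ring
  have hua_pos : 0 < u ^ a := Real.rpow_pos_of_pos hu a
  have h2a_pos : (0:ℝ) < 2 ^ a := Real.rpow_pos_of_pos two_pos a
  set B := ∫ t in Set.Ioi (0:ℝ), Real.exp (-u * Real.cosh t) * Real.cosh (a * t) with hB
  set E := ∫ t in Set.Ioi (0:ℝ), Real.exp (-(u / 2 * Real.exp t) + a * t) with hE
  set I := ∫ s in Set.Ioi (u / 2), Real.exp (-s) * s ^ (a - 1) with hI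
  have hB0 : 0 ≤ B := by
    apply setIntegral_nonneg measurableSet_Ioi
    intro t ht
    exact (hpt t ht).1
  refine ⟨hB0, ?_, ?_, ?_⟩
  · calc u ^ a * B ≤ u ^ a * E := mul_le_mul_of_nonneg_left hBE hua_pos.le
      _ = 2 ^ a * ((u / 2) ^ a * E) := by rw [hua]; ring
      _ = 2 ^ a * I := by rw [← hsub]
      _ ≤ 2 ^ a * Real.Gamma a := mul_le_mul_of_nonneg_left (I_le_Gamma ha hc.le) h2a_pos.le
  · calc Real.exp (-(u / 2)) * (2 ^ (a - 1) * I)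
        = Real.exp (-(u / 2)) * (2 ^ (a - 1) * ((u / 2) ^ a * E)) := by rw [← hsub]
      _ = u ^ a * (Real.exp (-(u / 2)) / 2 * E) := by rw [hua, h2pow]; ring
      _ ≤ u ^ a * B := mul_le_mul_of_nonneg_left hlowint hua_pos.le
  · calc u ^ a * B ≤ u ^ a * (E / 2 + (∫ t in Set.Ioi (0:ℝ), Real.exp (-(a * t))) / 2) :=
        mul_le_mul_of_nonneg_left hBsplit hua_pos.le
      _ = 2 ^ (a - 1) * ((u / 2) ^ a * E) +
          u ^ a * ((∫ t in Set.Ioi (0:ℝ), Real.exp (-(a * t))) / 2) := by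
        rw [hua, h2pow]; ring
      _ = 2 ^ (a - 1) * I + u ^ a * ((∫ t in Set.Ioi (0:ℝ), Real.exp (-(a * t))) / 2) := by
        rw [← hsub]

theorem theta_bounded_and_vanishes (κ : ℝ) (hκ : κ ∈ Set.Ioo (0 : ℝ) 1) :
    (∀ u : ℝ, 0 < u →
      |1 - (c1 κ / c2 κ) * besselK ((κ - 1) / 2) u * u ^ ((1 - κ) / 2)| ≤ 1) ∧
    Tendsto (fun u : ℝ => 1 - (c1 κ / c2 κ) * besselK ((κ - 1) / 2) u * u ^ ((1 - κ) / 2))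
      (nhdsWithin 0 (Set.Ioi 0)) (nhds 0) := by
  obtain ⟨hκ0, hκ1⟩ := hκ
  have ha : 0 < (1 - κ) / 2 := by linarith
  have hGa : 0 < Real.Gamma ((1 - κ) / 2) := Real.Gamma_pos_of_pos ha
  have hkey := const_id hκ0 hκ1
  have hP : (0:ℝ) < 2 ^ ((1 - κ) / 2 - 1) * Real.Gamma ((1 - κ) / 2) := by
    have := Real.rpow_pos_of_pos two_pos ((1 - κ) / 2 - 1)
    positivity
  have hC : 0 < c1 κ / c2 κ := by nlinarith
  have h2pow : (2:ℝ) ^ ((1 - κ) / 2) = 2 ^ ((1 - κ) / 2 - 1) * 2 := by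
    rw [← Real.rpow_add_one two_ne_zero]
    congr 1
    ring
  have hC2 : c1 κ / c2 κ * (2 ^ ((1 - κ) / 2) * Real.Gamma ((1 - κ) / 2)) = 2 := by
    rw [h2pow]
    linear_combination 2 * hkey
  have hBdef : ∀ u : ℝ, besselK ((κ - 1) / 2) u =
      ∫ t in Set.Ioi (0:ℝ), Real.exp (-u * Real.cosh t) * Real.cosh ((1 - κ) / 2 * t) := by
    intro u
    unfold besselK
    congr 1
    funext t
    rw [show (κ - 1) / 2 * t = -((1 - κ) / 2 * t) by ring, Real.cosh_neg]
  constructor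
  · intro u hu
    obtain ⟨h0, h2, -, -⟩ := main_est ha hu
    rw [hBdef u, abs_le]
    have hf0 : 0 ≤ c1 κ / c2 κ *
        (∫ t in Set.Ioi (0:ℝ), Real.exp (-u * Real.cosh t) * Real.cosh ((1 - κ) / 2 * t)) *
        u ^ ((1 - κ) / 2) :=
      mul_nonneg (mul_nonneg hC.le h0) (Real.rpow_nonneg hu.le _)
    have hf2 : c1 κ / c2 κ *
        (∫ t in Set.Ioi (0:ℝ), Real.exp (-u * Real.cosh t) * Real.cosh ((1 - κ) / 2 * t)) *
        u ^ ((1 - κ) / 2) ≤ 2 := by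
      have h3 := mul_le_mul_of_nonneg_left h2 hC.le
      rw [hC2] at h3
      linarith [h3, le_of_eq (by ring : c1 κ / c2 κ *
        (∫ t in Set.Ioi (0:ℝ), Real.exp (-u * Real.cosh t) * Real.cosh ((1 - κ) / 2 * t)) *
        u ^ ((1 - κ) / 2) = c1 κ / c2 κ * (u ^ ((1 - κ) / 2) *
        ∫ t in Set.Ioi (0:ℝ), Real.exp (-u * Real.cosh t) * Real.cosh ((1 - κ) / 2 * t)))]
    constructor <;> linarith
  · -- squeeze
    have hhalf : Tendsto (fun u : ℝ => u / 2) (nhdsWithin 0 (Set.Ioi 0))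
        (nhdsWithin 0 (Set.Ioi 0)) := by
      apply tendsto_nhdsWithin_of_tendsto_nhds_of_eventually_within
      · have : Tendsto (fun u : ℝ => u / 2) (nhds 0) (nhds (0 / 2)) :=
          (continuous_id.div_const 2).tendsto 0
        simpa using this.mono_left nhdsWithin_le_nhds
      · filter_upwards [self_mem_nhdsWithin] with u (hu : (0:ℝ) < u)
        exact div_pos hu two_pos
    have hI2 : Tendsto (fun u : ℝ => ∫ s in Set.Ioi (u / 2), Real.exp (-s) * s ^ ((1 - κ) / 2 - 1))
        (nhdsWithin 0 (Set.Ioi 0)) (nhds (Real.Gamma ((1 - κ) / 2))) := (I_tendsto ha).comp hhalf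
    have hexp : Tendsto (fun u : ℝ => Real.exp (-(u / 2))) (nhdsWithin 0 (Set.Ioi 0))
        (nhds 1) := by
      have : Tendsto (fun u : ℝ => Real.exp (-(u / 2))) (nhds 0) (nhds (Real.exp (-(0 / 2)))) :=
        (Real.continuous_exp.comp (continuous_id.div_const 2).neg).tendsto 0
      simpa using this.mono_left nhdsWithin_le_nhds
    have hrpow : Tendsto (fun u : ℝ => u ^ ((1 - κ) / 2)) (nhdsWithin 0 (Set.Ioi 0)) (nhds 0) := by
      have h1 : Tendsto (fun u : ℝ => u ^ ((1 - κ) / 2)) (nhds 0) (nhds 0) := by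
        have := (Real.continuousAt_rpow_const 0 ((1 - κ) / 2) (Or.inr ha.le)).tendsto
        rwa [Real.zero_rpow ha.ne'] at this
      exact h1.mono_left nhdsWithin_le_nhds
    have hg1 : Tendsto (fun u : ℝ => c1 κ / c2 κ * (Real.exp (-(u / 2)) *
        (2 ^ ((1 - κ) / 2 - 1) *
          ∫ s in Set.Ioi (u / 2), Real.exp (-s) * s ^ ((1 - κ) / 2 - 1))))
        (nhdsWithin 0 (Set.Ioi 0)) (nhds 1) := by
      have := ((hexp.mul (hI2.const_mul ((2:ℝ) ^ ((1 - κ) / 2 - 1)))).const_mul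
        (c1 κ / c2 κ))
      have heq : c1 κ / c2 κ * (1 * (2 ^ ((1 - κ) / 2 - 1) * Real.Gamma ((1 - κ) / 2))) = 1 := by
        rw [one_mul]; exact hkey
      rwa [heq] at this
    have hg2 : Tendsto (fun u : ℝ => c1 κ / c2 κ * (2 ^ ((1 - κ) / 2 - 1) *
        (∫ s in Set.Ioi (u / 2), Real.exp (-s) * s ^ ((1 - κ) / 2 - 1))) +
        c1 κ / c2 κ * (u ^ ((1 - κ) / 2) *
          ((∫ t in Set.Ioi (0:ℝ), Real.exp (-((1 - κ) / 2 * t))) / 2)))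
        (nhdsWithin 0 (Set.Ioi 0)) (nhds 1) := by
      have h1 := (hI2.const_mul ((2:ℝ) ^ ((1 - κ) / 2 - 1))).const_mul (c1 κ / c2 κ)
      have h2 := (hrpow.mul (tendsto_const_nhds
        (x := (∫ t in Set.Ioi (0:ℝ), Real.exp (-((1 - κ) / 2 * t))) / 2))).const_mul
        (c1 κ / c2 κ)
      have := h1.add h2
      have heq : c1 κ / c2 κ * (2 ^ ((1 - κ) / 2 - 1) * Real.Gamma ((1 - κ) / 2)) +
          c1 κ / c2 κ * (0 * ((∫ t in Set.Ioi (0:ℝ), Real.exp (-((1 - κ) / 2 * t))) / 2)) = 1 := by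
        rw [hkey]; ring
      rwa [heq] at this
    have hT : Tendsto (fun u : ℝ => c1 κ / c2 κ * besselK ((κ - 1) / 2) u * u ^ ((1 - κ) / 2))
        (nhdsWithin 0 (Set.Ioi 0)) (nhds 1) := by
      refine tendsto_of_tendsto_of_tendsto_of_le_of_le' hg1 hg2 ?_ ?_ <;>
        filter_upwards [self_mem_nhdsWithin] with u (hu : (0:ℝ) < u)
      · obtain ⟨-, -, h3, -⟩ := main_est ha hu
        have := mul_le_mul_of_nonneg_left h3 hC.le
        calc c1 κ / c2 κ * (Real.exp (-(u / 2)) * (2 ^ ((1 - κ) / 2 - 1) *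
              ∫ s in Set.Ioi (u / 2), Real.exp (-s) * s ^ ((1 - κ) / 2 - 1)))
            ≤ c1 κ / c2 κ * (u ^ ((1 - κ) / 2) *
              ∫ t in Set.Ioi (0:ℝ), Real.exp (-u * Real.cosh t) *
                Real.cosh ((1 - κ) / 2 * t)) := this
          _ = c1 κ / c2 κ * besselK ((κ - 1) / 2) u * u ^ ((1 - κ) / 2) := by
              rw [hBdef u]; ring
      · obtain ⟨-, -, -, h4⟩ := main_est ha hu
        have := mul_le_mul_of_nonneg_left h4 hC.le
        calc c1 κ / c2 κ * besselK ((κ - 1) / 2) u * u ^ ((1 - κ) / 2)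
            = c1 κ / c2 κ * (u ^ ((1 - κ) / 2) *
              ∫ t in Set.Ioi (0:ℝ), Real.exp (-u * Real.cosh t) *
                Real.cosh ((1 - κ) / 2 * t)) := by rw [hBdef u]; ring
          _ ≤ c1 κ / c2 κ * (2 ^ ((1 - κ) / 2 - 1) *
              (∫ s in Set.Ioi (u / 2), Real.exp (-s) * s ^ ((1 - κ) / 2 - 1)) +
              u ^ ((1 - κ) / 2) *
                ((∫ t in Set.Ioi (0:ℝ), Real.exp (-((1 - κ) / 2 * t))) / 2)) := this
          _ = c1 κ / c2 κ * (2 ^ ((1 - κ) / 2 - 1) *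
              (∫ s in Set.Ioi (u / 2), Real.exp (-s) * s ^ ((1 - κ) / 2 - 1))) +
              c1 κ / c2 κ * (u ^ ((1 - κ) / 2) *
                ((∫ t in Set.Ioi (0:ℝ), Real.exp (-((1 - κ) / 2 * t))) / 2)) := by ring
    have := (tendsto_const_nhds (x := (1:ℝ))).sub hT
    simpa using this
end
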